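/- Let (S, T⁺, T⁻) be an abstract spectrum, T = sup{T⁺, T⁻}, and let S₁ be a nonempty subset of S with the subspace topologies T₁⁺ = {U ∩ S₁ : U ∈ T⁺} and T₁⁻ = {U ∩ S₁ : U ∈ T⁻}. Then (S₁, T₁⁺, T₁⁻) is an abstract spectrum if and only if S₁ is a closed subset of the topological space (S, T). -/

import Mathlib

/-- `B` is a base for the topology `t`: every element of `B` is open and every
open set is a union of elements of `B`. -/
def IsBaseFor {S : Type*} (t : TopologicalSpace S) (B : Set (Set S)) : Prop :=
  (∀ V ∈ B, t.IsOpen V) ∧ ∀ U : Set S, t.IsOpen U → ∀ x ∈ U, ∃ V ∈ B, x ∈ V ∧ V ⊆ U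

/-- The family `L⁺ = {U ∈ T⁺ : S∖U ∈ T⁻}` (for `specL tp tm`); `specL tm tp` is `L⁻`. -/
def specL {S : Type*} (tp tm : TopologicalSpace S) : Set (Set S) :=
  {U | tp.IsOpen U ∧ tm.IsOpen Uᶜ}

/-- `(S, T⁺, T⁻)` is an abstract spectrum. -/
structure IsAbstractSpectrum {S : Type*} (tp tm : TopologicalSpace S) : Prop where
  nonempty : Nonempty S
  base_plus : IsBaseFor tp (specL tp tm)
  base_minus : IsBaseFor tm (specL tm tp)
  compact_of_plus_closed : ∀ F : Set S, @IsClosed S tp F → @IsCompact S tm F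
  compact_of_minus_closed : ∀ F : Set S, @IsClosed S tm F → @IsCompact S tp F
  t0 : @T0Space S tp ∨ @T0Space S tm

open Set TopologicalSpace Topology

section Aux

variable {S : Type*}

theorem IsAbstractSpectrum.symm' {tp tm : TopologicalSpace S} (h : IsAbstractSpectrum tp tm) :
    IsAbstractSpectrum tm tp :=
  ⟨h.nonempty, h.base_minus, h.base_plus, h.compact_of_minus_closed,
    h.compact_of_plus_closed, h.t0.symm⟩

theorem isCompact_of_le {t t' : TopologicalSpace S} (hle : t ≤ t') {s : Set S}
    (hs : @IsCompact S t s) : @IsCompact S t' s := by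
  rw [@isCompact_iff_ultrafilter_le_nhds S t']
  intro f hf
  obtain ⟨x, hxs, hx⟩ := (@isCompact_iff_ultrafilter_le_nhds S t s).1 hs f hf
  exact ⟨x, hxs, hx.trans (nhds_mono hle)⟩

theorem patch_compactSpace {tp tm : TopologicalSpace S} (h : IsAbstractSpectrum tp tm) :
    @CompactSpace S (tp ⊓ tm) := by
  refine @CompactSpace.mk S (tp ⊓ tm) ?_
  rw [@isCompact_iff_ultrafilter_le_nhds S (tp ⊓ tm)]
  intro U _
  set 𝒱 : Set (Set S) := {V | V ∈ specL tp tm ∧ V ∉ U} with h𝒱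
  set 𝒲 : Set (Set S) := {W | W ∈ specL tm tp ∧ W ∉ U} with h𝒲
  have hAcl : @IsClosed S tp (⋂ v : 𝒱, (v : Set S)ᶜ) := by
    refine @isClosed_iInter S _ tp _ fun v => ?_
    exact @IsOpen.isClosed_compl S tp _ v.2.1.1
  have hAcomp : @IsCompact S tm (⋂ v : 𝒱, (v : Set S)ᶜ) :=
    h.compact_of_plus_closed _ hAcl
  have step1 : ∀ u : Finset 𝒲,
      ((⋂ v : 𝒱, (v : Set S)ᶜ) ∩ ⋂ w ∈ u, (w : Set S)ᶜ).Nonempty := by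
    intro u
    have hDcl : @IsClosed S tm (⋂ w ∈ u, (w : Set S)ᶜ) := by
      refine @isClosed_biInter S _ tm _ _ fun w _ => ?_
      exact @IsOpen.isClosed_compl S tm _ w.2.1.1
    have hDcomp : @IsCompact S tp (⋂ w ∈ u, (w : Set S)ᶜ) :=
      h.compact_of_minus_closed _ hDcl
    have hDmem : (⋂ w ∈ u, (w : Set S)ᶜ) ∈ (U : Filter S) := by
      exact (Filter.biInter_finset_mem u).2
        fun w _ => Ultrafilter.compl_mem_iff_notMem.2 w.2.2
    have key := @IsCompact.inter_iInter_nonempty S tp _ _ hDcomp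
      (fun v : 𝒱 => (v : Set S)ᶜ)
      (fun v => @IsOpen.isClosed_compl S tp _ v.2.1.1)
      (fun t => Filter.nonempty_of_mem (Filter.inter_mem hDmem
        ((Filter.biInter_finset_mem t).2
          fun v _ => Ultrafilter.compl_mem_iff_notMem.2 v.2.2)))
    rw [Set.inter_comm] at key
    exact key
  have key := @IsCompact.inter_iInter_nonempty S tm _ _ hAcomp
    (fun w : 𝒲 => (w : Set S)ᶜ)
    (fun w => @IsOpen.isClosed_compl S tm _ w.2.1.1) step1
  obtain ⟨x, hxA, hxB⟩ := key
  refine ⟨x, mem_univ x, ?_⟩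
  have hmemp : ∀ V ∈ specL tp tm, x ∈ V → V ∈ U := by
    intro V hV hxV
    by_contra hn
    exact (Set.mem_iInter.1 hxA ⟨V, hV, hn⟩) hxV
  have hmemm : ∀ W ∈ specL tm tp, x ∈ W → W ∈ U := by
    intro W hW hxW
    by_contra hn
    exact (Set.mem_iInter.1 hxB ⟨W, hW, hn⟩) hxW
  have hp : (U : Filter S) ≤ @nhds S tp x := by
    refine (@le_nhds_iff S tp x _).2 ?_
    intro s hxs hs
    obtain ⟨V, hV, hxV, hsub⟩ := h.base_plus.2 s hs x hxs
    exact Filter.mem_of_superset (hmemp V hV hxV) hsub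
  have hm : (U : Filter S) ≤ @nhds S tm x := by
    refine (@le_nhds_iff S tm x _).2 ?_
    intro s hxs hs
    obtain ⟨V, hV, hxV, hsub⟩ := h.base_minus.2 s hs x hxs
    exact Filter.mem_of_superset (hmemm V hV hxV) hsub
  exact (le_inf hp hm).trans (nhds_inf (t₁ := tp) (t₂ := tm)).ge

theorem patch_t2_aux {tp tm : TopologicalSpace S} (h : IsAbstractSpectrum tp tm)
    (ht0 : @T0Space S tp) : @T2Space S (tp ⊓ tm) := by
  refine @T2Space.mk S (tp ⊓ tm) fun x y hxy => ?_
  obtain ⟨U, hU, hxor⟩ := (@t0Space_iff_exists_isOpen_xor'_mem S tp).1 ht0 hxy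
  have main : ∀ a b : S, a ∈ U → b ∉ U →
      ∃ u v : Set S, IsOpen[tp ⊓ tm] u ∧ IsOpen[tp ⊓ tm] v ∧ a ∈ u ∧ b ∈ v ∧ Disjoint u v := by
    intro a b ha hb
    obtain ⟨V, hV, haV, hsub⟩ := h.base_plus.2 U hU a ha
    exact ⟨V, Vᶜ, IsOpen.mono hV.1 inf_le_left, IsOpen.mono hV.2 inf_le_right, haV,
      fun hbV => hb (hsub hbV), disjoint_compl_right⟩
  rcases hxor with ⟨hxU, hyU⟩ | ⟨hyU, hxU⟩
  · exact main x y hxU hyU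
  · obtain ⟨u, v, hu, hv, hyu, hxv, hd⟩ := main y x hyU hxU
    exact ⟨v, u, hv, hu, hxv, hyu, hd.symm⟩

theorem patch_t2 {tp tm : TopologicalSpace S} (h : IsAbstractSpectrum tp tm) :
    @T2Space S (tp ⊓ tm) := by
  rcases h.t0 with ht | ht
  · exact patch_t2_aux h ht
  · have := patch_t2_aux h.symm' ht
    rwa [inf_comm] at this

theorem genFrom_eq (tp tm : TopologicalSpace S) :
    TopologicalSpace.generateFrom {U : Set S | tp.IsOpen U ∨ tm.IsOpen U} = tp ⊓ tm := by
  apply le_antisymm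
  · exact le_inf (fun U hU => TopologicalSpace.GenerateOpen.basic U (Or.inl hU))
      (fun U hU => TopologicalSpace.GenerateOpen.basic U (Or.inr hU))
  · refine le_generateFrom fun s hs => ?_
    exact hs.elim (fun h1 => IsOpen.mono h1 inf_le_left) (fun h2 => IsOpen.mono h2 inf_le_right)

theorem isBaseFor_induced {X : Type*} {tp tm : TopologicalSpace S} (f : X → S)
    (hb : IsBaseFor tp (specL tp tm)) :
    IsBaseFor (tp.induced f) (specL (tp.induced f) (tm.induced f)) := by
  refine ⟨fun V hV => hV.1, fun W hW x hx => ?_⟩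
  obtain ⟨U, hU, rfl⟩ := hW
  obtain ⟨V, hV, hxV, hsub⟩ := hb.2 U hU (f x) hx
  exact ⟨f ⁻¹' V, ⟨⟨V, hV.1, rfl⟩, ⟨Vᶜ, hV.2, rfl⟩⟩, hxV, fun y hy => hsub hy⟩

theorem sub_compact {tp tm : TopologicalSpace S} (h : IsAbstractSpectrum tp tm)
    {S₁ : Set S} (hcl : @IsClosed S (tp ⊓ tm) S₁) :
    ∀ F : Set S₁, @IsClosed S₁ (tp.induced Subtype.val) F →
      @IsCompact S₁ (tm.induced Subtype.val) F := by
  intro F hF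
  rw [@isClosed_induced_iff S₁ S tp F Subtype.val] at hF
  obtain ⟨C, hC, rfl⟩ := hF
  have hind : @Topology.IsInducing S₁ S (tm.induced Subtype.val) tm Subtype.val :=
    @Topology.IsInducing.mk S₁ S (tm.induced Subtype.val) tm Subtype.val rfl
  have himg : @IsCompact S tm (Subtype.val '' (Subtype.val ⁻¹' C : Set S₁)) := by
    rw [Set.image_preimage_eq_inter_range, Subtype.range_coe]
    exact isCompact_of_le (inf_le_right : tp ⊓ tm ≤ tm)
      (@IsClosed.isCompact S (tp ⊓ tm) (C ∩ S₁) (patch_compactSpace h)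
        (@IsClosed.inter S _ _ (tp ⊓ tm) (IsClosed.mono hC inf_le_left) hcl))
  exact (@Topology.IsInducing.isCompact_iff S₁ S (tm.induced Subtype.val) tm
    (Subtype.val ⁻¹' C) Subtype.val hind).2 himg

theorem t0_induced {t : TopologicalSpace S} (ht : @T0Space S t) (S₁ : Set S) :
    @T0Space S₁ (t.induced Subtype.val) := by
  letI := t
  have h1 : T0Space S₁ := Topology.IsEmbedding.subtypeVal.t0Space
  exact h1

end Aux

/-- Let `(S, T⁺, T⁻)` be an abstract spectrum, `T = sup{T⁺, T⁻}`, and `S₁` a nonempty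
subset of `S` with the subspace topologies `T₁⁺`, `T₁⁻`. Then `(S₁, T₁⁺, T₁⁻)` is an
abstract spectrum iff `S₁` is closed in `(S, T)`. -/
theorem stmt6 {S : Type*} (tp tm : TopologicalSpace S)
    (h : IsAbstractSpectrum tp tm) (S₁ : Set S) (hS₁ : S₁.Nonempty) :
    IsAbstractSpectrum
        (TopologicalSpace.induced (Subtype.val : S₁ → S) tp)
        (TopologicalSpace.induced (Subtype.val : S₁ → S) tm) ↔
      @IsClosed S (TopologicalSpace.generateFrom {U : Set S | tp.IsOpen U ∨ tm.IsOpen U}) S₁ := by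
  rw [genFrom_eq]
  constructor
  · intro h₁
    have hCS : @CompactSpace S₁ ((tp ⊓ tm).induced Subtype.val) := by
      rw [induced_inf]
      exact patch_compactSpace h₁
    have huniv : @IsCompact S₁ ((tp ⊓ tm).induced Subtype.val) Set.univ :=
      @CompactSpace.isCompact_univ S₁ ((tp ⊓ tm).induced Subtype.val) hCS
    have hind : @Topology.IsInducing S₁ S ((tp ⊓ tm).induced Subtype.val) (tp ⊓ tm)
        Subtype.val :=
      @Topology.IsInducing.mk S₁ S ((tp ⊓ tm).induced Subtype.val) (tp ⊓ tm) Subtype.val rfl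
    have hc : @IsCompact S (tp ⊓ tm) S₁ := by
      have := (@Topology.IsInducing.isCompact_iff S₁ S ((tp ⊓ tm).induced Subtype.val)
        (tp ⊓ tm) Set.univ Subtype.val hind).1 huniv
      rwa [Set.image_univ, Subtype.range_coe] at this
    exact @IsCompact.isClosed S (tp ⊓ tm) (patch_t2 h) S₁ hc
  · intro hcl
    refine ⟨hS₁.to_subtype, isBaseFor_induced _ h.base_plus,
      isBaseFor_induced _ h.base_minus, sub_compact h hcl, ?_, ?_⟩
    · have hcl' : @IsClosed S (tm ⊓ tp) S₁ := by rwa [inf_comm] at hcl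
      exact sub_compact h.symm' hcl'
    · exact h.t0.imp (fun ht => t0_induced ht S₁) (fun ht => t0_induced ht S₁)
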